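/- Let A be a complete DFA with m > 1 states, k1 ≥ 1 final states that are not the initial state, and B a complete DFA with n > 1 states. Then there exists a complete DFA accepting L(A)*·L(B) with at most ((3/4)·2^m − 1)·(2^n − 1) − (2^(m−1) − 2^(m−k1−1))·(2^(n−1) − 1) states. -/

import Mathlib

open Computability

set_option linter.unusedSectionVars false

attribute [local instance] Classical.propDecidable Classical.decEq

lemma kstar_append {α} {L : Language α} {x y : List α} (hx : x ∈ L∗) (hy : y ∈ L) :
    x ++ y ∈ L∗ := by
  obtain ⟨S, rfl, hS⟩ := hx
  rw [← List.flatten_concat]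
  exact Language.join_mem_kstar (by rintro z hz; simp at hz; rcases hz with h | rfl <;> [exact hS z h; exact hy])

lemma kstar_split {α} {L : Language α} {w : List α} (hw : w ∈ L∗) (hne : w ≠ []) :
    ∃ x y, w = x ++ y ∧ x ∈ L∗ ∧ y ∈ L ∧ y ≠ [] := by
  rw [Language.mem_kstar_iff_exists_nonempty] at hw
  obtain ⟨S, rfl, hS⟩ := hw
  rcases List.eq_nil_or_concat S with rfl | ⟨S', y, rfl⟩
  · simp at hne
  · refine ⟨S'.flatten, y, by simp, ?_, (hS y (by simp)).1, (hS y (by simp)).2⟩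
    exact Language.join_mem_kstar fun z hz => (hS z (by simp [hz])).1
open Computability

attribute [local instance] Classical.propDecidable Classical.decEq

section SC
variable {α σ₁ σ₂ : Type} [Fintype σ₁] [Fintype σ₂] (A : DFA α σ₁) (B : DFA α σ₂)

/-- DFA for L(A)* · L(B). -/
noncomputable def starCat : DFA α (Finset σ₁ × Finset σ₂) where
  step := fun pt a =>
    let q := pt.1.image (fun x => A.step x a)
    let p' := if ∃ x ∈ q, x ∈ A.accept then insert A.start q else q
    let u := pt.2.image (fun x => B.step x a)
    (p', if ∃ x ∈ p', x ∈ A.accept then insert B.start u else u)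
  start := ({A.start}, {B.start})
  accept := {pt | ∃ x ∈ pt.2, x ∈ B.accept}

lemma concat_split {w x y' : List α} {a : α} (h : w ++ [a] = x ++ y') (hne : y' ≠ []) :
    ∃ y, y' = y ++ [a] ∧ w = x ++ y := by
  rcases List.eq_nil_or_concat y' with rfl | ⟨y, b, rfl⟩
  · exact absurd rfl hne
  · rw [List.concat_eq_append, ← List.append_assoc] at h
    obtain ⟨h1, h2⟩ := List.append_inj' h rfl
    cases h2; exact ⟨y, List.concat_eq_append, h1⟩

lemma starCat_eval (w : List α) :
    (∀ c, c ∈ ((starCat A B).eval w).1 ↔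
      ∃ x y, w = x ++ y ∧ x ∈ (A.accepts)∗ ∧ A.evalFrom A.start y = c) ∧
    (∀ c, c ∈ ((starCat A B).eval w).2 ↔
      ∃ x y, w = x ++ y ∧ x ∈ (A.accepts)∗ ∧ B.evalFrom B.start y = c) := by
  induction w using List.reverseRecOn with
  | nil =>
    constructor <;> intro c <;>
      simp only [DFA.eval_nil, starCat, Finset.mem_singleton] <;>
      constructor
    · rintro rfl; exact ⟨[], [], rfl, Language.nil_mem_kstar _, rfl⟩
    · rintro ⟨x, y, hxy, -, rfl⟩
      rw [List.nil_eq, List.append_eq_nil_iff] at hxy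
      rw [hxy.2]; rfl
    · rintro rfl; exact ⟨[], [], rfl, Language.nil_mem_kstar _, rfl⟩
    · rintro ⟨x, y, hxy, -, rfl⟩
      rw [List.nil_eq, List.append_eq_nil_iff] at hxy
      rw [hxy.2]; rfl
  | append_singleton w a ih =>
    obtain ⟨ih1, ih2⟩ := ih
    rw [DFA.eval_append_singleton]
    set p := ((starCat A B).eval w).1 with hp
    set t := ((starCat A B).eval w).2 with ht
    -- characterize the image sets
    have hq : ∀ c, c ∈ p.image (fun x => A.step x a) ↔
        ∃ x y, w = x ++ y ∧ x ∈ (A.accepts)∗ ∧ A.evalFrom A.start (y ++ [a]) = c := by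
      intro c
      simp only [Finset.mem_image]
      constructor
      · rintro ⟨d, hd, rfl⟩
        obtain ⟨x, y, rfl, hx, rfl⟩ := (ih1 d).1 hd
        exact ⟨x, y, rfl, hx, (DFA.evalFrom_append_singleton _ _ _ _)⟩
      · rintro ⟨x, y, rfl, hx, rfl⟩
        exact ⟨A.evalFrom A.start y, (ih1 _).2 ⟨x, y, rfl, hx, rfl⟩,
          (DFA.evalFrom_append_singleton _ _ _ _).symm⟩
    -- the key: q hits a final state iff w ++ [a] ∈ L(A)*
    have hstar : (∃ x ∈ p.image (fun x => A.step x a), x ∈ A.accept) ↔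
        w ++ [a] ∈ (A.accepts)∗ := by
      constructor
      · rintro ⟨c, hc, hacc⟩
        obtain ⟨x, y, rfl, hx, rfl⟩ := (hq c).1 hc
        rw [List.append_assoc]
        exact kstar_append hx hacc
      · intro hw
        obtain ⟨x, y, hxy, hx, hy, hyne⟩ := kstar_split hw (by simp)
        obtain ⟨y0, rfl, rfl⟩ := concat_split hxy hyne
        exact ⟨A.evalFrom A.start (y0 ++ [a]), (hq _).2 ⟨x, y0, rfl, hx, rfl⟩, hy⟩
    have h1 : ∀ c, c ∈ ((starCat A B).step (p, t) a).1 ↔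
        ∃ x y, w ++ [a] = x ++ y ∧ x ∈ (A.accepts)∗ ∧ A.evalFrom A.start y = c := by
      intro c
      show c ∈ (if ∃ x ∈ p.image (fun x => A.step x a), x ∈ A.accept
          then insert A.start (p.image (fun x => A.step x a))
          else p.image (fun x => A.step x a)) ↔ _
      constructor
      · intro hc
        by_cases hf : ∃ x ∈ p.image (fun x => A.step x a), x ∈ A.accept
        · rw [if_pos hf, Finset.mem_insert] at hc
          rcases hc with rfl | hc
          · exact ⟨w ++ [a], [], by simp, hstar.1 hf, rfl⟩
          · obtain ⟨x, y, rfl, hx, rfl⟩ := (hq c).1 hc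
            exact ⟨x, y ++ [a], by simp, hx, rfl⟩
        · rw [if_neg hf] at hc
          obtain ⟨x, y, rfl, hx, rfl⟩ := (hq c).1 hc
          exact ⟨x, y ++ [a], by simp, hx, rfl⟩
      · rintro ⟨x, y', hxy, hx, rfl⟩
        by_cases hyne : y' = []
        · subst hyne
          rw [List.append_nil] at hxy
          subst hxy
          rw [if_pos (hstar.2 hx), Finset.mem_insert]
          exact Or.inl rfl
        · obtain ⟨y, rfl, rfl⟩ := concat_split hxy hyne
          have : A.evalFrom A.start (y ++ [a]) ∈ p.image (fun x => A.step x a) :=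
            (hq _).2 ⟨x, y, rfl, hx, rfl⟩
          split
          · exact Finset.mem_insert_of_mem this
          · exact this
    refine ⟨h1, ?_⟩
    -- second component
    have hu : ∀ c, c ∈ t.image (fun x => B.step x a) ↔
        ∃ x y, w = x ++ y ∧ x ∈ (A.accepts)∗ ∧ B.evalFrom B.start (y ++ [a]) = c := by
      intro c
      simp only [Finset.mem_image]
      constructor
      · rintro ⟨d, hd, rfl⟩
        obtain ⟨x, y, rfl, hx, rfl⟩ := (ih2 d).1 hd
        exact ⟨x, y, rfl, hx, (DFA.evalFrom_append_singleton _ _ _ _)⟩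
      · rintro ⟨x, y, rfl, hx, rfl⟩
        exact ⟨B.evalFrom B.start y, (ih2 _).2 ⟨x, y, rfl, hx, rfl⟩,
          (DFA.evalFrom_append_singleton _ _ _ _).symm⟩
    have hstar2 : (∃ x ∈ ((starCat A B).step (p, t) a).1, x ∈ A.accept) ↔
        w ++ [a] ∈ (A.accepts)∗ := by
      constructor
      · rintro ⟨c, hc, hacc⟩
        obtain ⟨x, y, hxy, hx, rfl⟩ := (h1 c).1 hc
        rw [hxy]; exact kstar_append hx hacc
      · intro hw
        obtain ⟨x, y, hxy, hx, hy, hyne⟩ := kstar_split hw (by simp)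
        exact ⟨A.evalFrom A.start y, (h1 _).2 ⟨x, y, hxy, hx, rfl⟩, hy⟩
    intro c
    show c ∈ (if ∃ x ∈ ((starCat A B).step (p, t) a).1, x ∈ A.accept
        then insert B.start (t.image (fun x => B.step x a))
        else t.image (fun x => B.step x a)) ↔ _
    constructor
    · intro hc
      by_cases hf : ∃ x ∈ ((starCat A B).step (p, t) a).1, x ∈ A.accept
      · rw [if_pos hf, Finset.mem_insert] at hc
        rcases hc with rfl | hc
        · exact ⟨w ++ [a], [], by simp, hstar2.1 hf, rfl⟩
        · obtain ⟨x, y, rfl, hx, rfl⟩ := (hu c).1 hc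
          exact ⟨x, y ++ [a], by simp, hx, rfl⟩
      · rw [if_neg hf] at hc
        obtain ⟨x, y, rfl, hx, rfl⟩ := (hu c).1 hc
        exact ⟨x, y ++ [a], by simp, hx, rfl⟩
    · rintro ⟨x, y', hxy, hx, rfl⟩
      by_cases hyne : y' = []
      · subst hyne
        rw [List.append_nil] at hxy
        subst hxy
        rw [if_pos (hstar2.2 hx), Finset.mem_insert]
        exact Or.inl rfl
      · obtain ⟨y, rfl, rfl⟩ := concat_split hxy hyne
        have : B.evalFrom B.start (y ++ [a]) ∈ t.image (fun x => B.step x a) :=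
          (hu _).2 ⟨x, y, rfl, hx, rfl⟩
        split
        · exact Finset.mem_insert_of_mem this
        · exact this

lemma starCat_accepts : (starCat A B).accepts = (A.accepts)∗ * B.accepts := by
  ext w
  rw [DFA.mem_accepts, Language.mem_mul]
  show (∃ x ∈ ((starCat A B).eval w).2, x ∈ B.accept) ↔ _
  constructor
  · rintro ⟨c, hc, hacc⟩
    obtain ⟨x, y, rfl, hx, rfl⟩ := ((starCat_eval A B w).2 c).1 hc
    exact ⟨x, hx, y, hacc, rfl⟩
  · rintro ⟨x, hx, y, hy, rfl⟩
    exact ⟨B.evalFrom B.start y, ((starCat_eval A B (x ++ y)).2 _).2 ⟨x, y, rfl, hx, rfl⟩, hy⟩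


noncomputable def F0 : Finset σ₁ :=
  Finset.univ.filter fun x => x ∈ A.accept ∧ x ≠ A.start

lemma mem_F0 {x : σ₁} : x ∈ F0 A ↔ x ∈ A.accept ∧ x ≠ A.start := by
  simp [F0]

def good (pt : Finset σ₁ × Finset σ₂) : Prop :=
  pt.1.Nonempty ∧ ((pt.1 ∩ F0 A).Nonempty → A.start ∈ pt.1) ∧ pt.2.Nonempty ∧
    ((∃ x ∈ pt.1, x ∈ A.accept) → B.start ∈ pt.2)

lemma good_start : good A B (starCat A B).start :=
  ⟨⟨A.start, Finset.mem_singleton_self _⟩, fun _ => Finset.mem_singleton_self _,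
    ⟨B.start, Finset.mem_singleton_self _⟩, fun _ => Finset.mem_singleton_self _⟩

lemma starCat_step_fst (pt : Finset σ₁ × Finset σ₂) (a : α) :
    ((starCat A B).step pt a).1 =
      if ∃ x ∈ pt.1.image (fun x => A.step x a), x ∈ A.accept
      then insert A.start (pt.1.image (fun x => A.step x a))
      else pt.1.image (fun x => A.step x a) := rfl

lemma starCat_step_snd (pt : Finset σ₁ × Finset σ₂) (a : α) :
    ((starCat A B).step pt a).2 =
      if ∃ x ∈ ((starCat A B).step pt a).1, x ∈ A.accept
      then insert B.start (pt.2.image (fun x => B.step x a))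
      else pt.2.image (fun x => B.step x a) := rfl

lemma good_step {pt : Finset σ₁ × Finset σ₂} (h : good A B pt) (a : α) :
    good A B ((starCat A B).step pt a) := by
  obtain ⟨h1, h2, h3, h4⟩ := h
  have hqne : (pt.1.image (fun x => A.step x a)).Nonempty := h1.image _
  have hune : (pt.2.image (fun x => B.step x a)).Nonempty := h3.image _
  refine ⟨?_, ?_, ?_, ?_⟩
  · rw [starCat_step_fst]
    split
    · exact Finset.insert_nonempty _ _
    · exact hqne
  · rw [starCat_step_fst]
    by_cases hf : ∃ x ∈ pt.1.image (fun x => A.step x a), x ∈ A.accept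
    · rw [if_pos hf]
      intro _
      exact Finset.mem_insert_self _ _
    · rw [if_neg hf]
      rintro ⟨x, hx⟩
      rw [Finset.mem_inter] at hx
      exact absurd ⟨x, hx.1, ((mem_F0 A).1 hx.2).1⟩ hf
  · rw [starCat_step_snd]
    split
    · exact Finset.insert_nonempty _ _
    · exact hune
  · intro hf
    rw [starCat_step_snd, if_pos hf]
    exact Finset.mem_insert_self _ _

noncomputable def starCatR : DFA α {pt : Finset σ₁ × Finset σ₂ // good A B pt} where
  step := fun s a => ⟨(starCat A B).step s.1 a, good_step A B s.2 a⟩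
  start := ⟨(starCat A B).start, good_start A B⟩
  accept := {s | s.1 ∈ (starCat A B).accept}

lemma starCatR_evalFrom (s : {pt : Finset σ₁ × Finset σ₂ // good A B pt}) (w : List α) :
    ((starCatR A B).evalFrom s w).1 = (starCat A B).evalFrom s.1 w := by
  induction w generalizing s with
  | nil => rfl
  | cons a w ih => exact ih _

lemma starCatR_accepts : (starCatR A B).accepts = (starCat A B).accepts := by
  ext w
  rw [DFA.mem_accepts, DFA.mem_accepts]
  show (((starCatR A B).evalFrom (starCatR A B).start w)).1 ∈ (starCat A B).accept ↔ _
  rw [starCatR_evalFrom]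
  rfl

end SC

-- counting helpers
lemma card_mem_le {γ : Type} [Fintype γ] (a : γ) (Q : Finset γ → Prop) [DecidablePred Q] (R : Finset γ)
    (h : ∀ p, Q p → a ∈ p ∧ p.erase a ⊆ R) :
    (Finset.univ.filter Q).card ≤ 2 ^ R.card := by
  rw [← Finset.card_powerset]
  apply Finset.card_le_card_of_injOn (fun p => p.erase a)
  · intro p hp
    simp only [Finset.mem_coe, Finset.mem_filter] at hp
    exact Finset.mem_powerset.2 (h p hp.2).2
  · intro p hp p' hp' he
    simp only [Finset.mem_coe, Finset.mem_filter] at hp hp'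
    simp only at he
    rw [← Finset.insert_erase (h p hp.2).1, ← Finset.insert_erase (h p' hp'.2).1, he]

lemma card_subset_nonempty_le {γ : Type} [Fintype γ] (Q : Finset γ → Prop) [DecidablePred Q] (R : Finset γ)
    (h : ∀ p, Q p → p ⊆ R ∧ p.Nonempty) :
    (Finset.univ.filter Q).card ≤ 2 ^ R.card - 1 := by
  have hsub : Finset.univ.filter Q ⊆ R.powerset.erase ∅ := by
    intro p hp
    simp only [Finset.mem_filter, Finset.mem_univ, true_and] at hp
    rw [Finset.mem_erase, Finset.mem_powerset]
    exact ⟨(h p hp).2.ne_empty, (h p hp).1⟩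
  calc (Finset.univ.filter Q).card ≤ (R.powerset.erase ∅).card := Finset.card_le_card hsub
    _ = 2 ^ R.card - 1 := by
        rw [Finset.card_erase_of_mem (Finset.empty_mem_powerset R), Finset.card_powerset]

lemma card_mem_eq {γ : Type} [Fintype γ] (a : γ) :
    (Finset.univ.filter fun p : Finset γ => a ∈ p).card = 2 ^ (Fintype.card γ - 1) := by
  have h := Finset.card_filter_add_card_filter_not
    (s := (Finset.univ : Finset (Finset γ))) (p := fun p : Finset γ => a ∈ p)
  have h2 : (Finset.univ.filter fun p : Finset γ => ¬ a ∈ p) = ({a}ᶜ : Finset γ).powerset := by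
    ext p
    simp only [Finset.mem_filter, Finset.mem_univ, true_and, Finset.mem_powerset]
    constructor
    · intro ha x hx
      rw [Finset.mem_compl, Finset.mem_singleton]
      rintro rfl; exact ha hx
    · intro hsub ha
      have := hsub ha
      rw [Finset.mem_compl, Finset.mem_singleton] at this
      exact this rfl
  have h3 : ({a}ᶜ : Finset γ).card = Fintype.card γ - 1 := by
    rw [Finset.card_compl, Finset.card_singleton]
  rw [h2, Finset.card_powerset, h3, Finset.card_univ, Fintype.card_finset] at h
  have hpos : 1 ≤ Fintype.card γ := Fintype.card_pos_iff.2 ⟨a⟩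
  have hpow : 2 ^ Fintype.card γ = 2 * 2 ^ (Fintype.card γ - 1) := by
    conv_lhs => rw [show Fintype.card γ = (Fintype.card γ - 1) + 1 from by omega]
    ring
  omega


/-- General upper bound for star combined with catenation, where the m-state DFA A has
    k₁ ≥ 1 final states that are not its initial state, and B has n > 1 states. -/
theorem starcat_upper
    (m n k₁ : ℕ) (hm : 1 < m) (hn : 1 < n) (hk : 1 ≤ k₁)
    (α σ₁ σ₂ : Type) [Fintype σ₁] [Fintype σ₂]
    (A : DFA α σ₁) (B : DFA α σ₂)
    (hcm : Fintype.card σ₁ = m) (hcn : Fintype.card σ₂ = n)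
    (hk₁ : (A.accept \ {A.start}).ncard = k₁) :
    ∃ (σ : Type) (inst : Fintype σ) (C : DFA α σ),
      C.accepts = (A.accepts)∗ * B.accepts ∧
      @Fintype.card σ inst ≤
        (3 * 2 ^ (m - 2) - 1) * (2 ^ n - 1) -
          (2 ^ (m - 1) - 2 ^ (m - k₁ - 1)) * (2 ^ (n - 1) - 1) := by
  subst hcm hcn
  refine ⟨{pt : Finset σ₁ × Finset σ₂ // good A B pt}, inferInstance, starCatR A B,
    by rw [starCatR_accepts, starCat_accepts], ?_⟩
  set M := Fintype.card σ₁ with hM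
  set N := Fintype.card σ₂ with hN
  have hF0 : (F0 A).card = k₁ := by
    have hset : (A.accept \ {A.start}).toFinset = F0 A := by
      ext x; simp [mem_F0, Set.mem_diff]
    rw [← hk₁, Set.ncard_eq_toFinset_card', hset]
  have hstart : A.start ∉ F0 A := by simp [mem_F0]
  have hins : (insert A.start (F0 A)).card = k₁ + 1 := by
    rw [Finset.card_insert_of_notMem hstart, hF0]
  have hRcard : ((insert A.start (F0 A))ᶜ : Finset σ₁).card = M - k₁ - 1 := by
    rw [Finset.card_compl, hins, ← hM]; omega
  have hcard : Fintype.card {pt : Finset σ₁ × Finset σ₂ // good A B pt}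
      = (Finset.univ.filter (good A B)).card := Fintype.card_subtype _
  -- splitting of the good set
  have hsplit : Finset.univ.filter (good A B) ⊆
      ((Finset.univ.filter fun p : Finset σ₁ =>
          (p.Nonempty ∧ ((p ∩ F0 A).Nonempty → A.start ∈ p)) ∧ ¬ ∃ x ∈ p, x ∈ A.accept) ×ˢ
        (Finset.univ.filter fun t : Finset σ₂ => t.Nonempty)) ∪
      ((Finset.univ.filter fun p : Finset σ₁ =>
          (p.Nonempty ∧ ((p ∩ F0 A).Nonempty → A.start ∈ p)) ∧ ∃ x ∈ p, x ∈ A.accept) ×ˢ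
        (Finset.univ.filter fun t : Finset σ₂ => B.start ∈ t)) := by
    intro pt hpt
    rw [Finset.mem_filter] at hpt
    obtain ⟨-, h1, h2, h3, h4⟩ := hpt
    rw [Finset.mem_union, Finset.mem_product, Finset.mem_product]
    by_cases hx : ∃ x ∈ pt.1, x ∈ A.accept
    · exact Or.inr ⟨Finset.mem_filter.2 ⟨Finset.mem_univ _, ⟨h1, h2⟩, hx⟩,
        Finset.mem_filter.2 ⟨Finset.mem_univ _, h4 hx⟩⟩
    · exact Or.inl ⟨Finset.mem_filter.2 ⟨Finset.mem_univ _, ⟨h1, h2⟩, hx⟩,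
        Finset.mem_filter.2 ⟨Finset.mem_univ _, h3⟩⟩
  have hTne : (Finset.univ.filter fun t : Finset σ₂ => t.Nonempty).card ≤ 2 ^ N - 1 := by
    have h := card_subset_nonempty_le (fun t : Finset σ₂ => t.Nonempty) Finset.univ
      (fun t ht => ⟨Finset.subset_univ t, ht⟩)
    rwa [Finset.card_univ, ← hN] at h
  have hTs2 : (Finset.univ.filter fun t : Finset σ₂ => B.start ∈ t).card ≤ 2 ^ (N - 1) := by
    have h := card_mem_le B.start (fun t : Finset σ₂ => B.start ∈ t) ({B.start}ᶜ)
      (fun t ht => ⟨ht, fun x hx => Finset.mem_compl.2 (by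
        rw [Finset.mem_singleton]
        exact Finset.ne_of_mem_erase hx)⟩)
    rwa [Finset.card_compl, Finset.card_singleton, ← hN] at h
  have hmain : (Finset.univ.filter (good A B)).card ≤
      (Finset.univ.filter fun p : Finset σ₁ =>
          (p.Nonempty ∧ ((p ∩ F0 A).Nonempty → A.start ∈ p)) ∧ ¬ ∃ x ∈ p, x ∈ A.accept).card
        * (2 ^ N - 1) +
      (Finset.univ.filter fun p : Finset σ₁ =>
          (p.Nonempty ∧ ((p ∩ F0 A).Nonempty → A.start ∈ p)) ∧ ∃ x ∈ p, x ∈ A.accept).card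
        * 2 ^ (N - 1) := by
    refine le_trans (Finset.card_le_card hsplit) (le_trans (Finset.card_union_le _ _) ?_)
    rw [Finset.card_product, Finset.card_product]
    exact Nat.add_le_add (Nat.mul_le_mul le_rfl hTne) (Nat.mul_le_mul le_rfl hTs2)
  have hmemcard : (Finset.univ.filter fun p : Finset σ₁ => A.start ∈ p).card = 2 ^ (M - 1) := by
    have h := card_mem_eq A.start
    rwa [← hM] at h
  -- upper bound on the total number of good first components
  have hsum : (Finset.univ.filter fun p : Finset σ₁ =>
        (p.Nonempty ∧ ((p ∩ F0 A).Nonempty → A.start ∈ p)) ∧ ∃ x ∈ p, x ∈ A.accept).card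
      + (Finset.univ.filter fun p : Finset σ₁ =>
        (p.Nonempty ∧ ((p ∩ F0 A).Nonempty → A.start ∈ p)) ∧ ¬ ∃ x ∈ p, x ∈ A.accept).card
      = (Finset.univ.filter fun p : Finset σ₁ =>
        p.Nonempty ∧ ((p ∩ F0 A).Nonempty → A.start ∈ p)).card := by
    have e1 : (Finset.univ.filter fun p : Finset σ₁ =>
        (p.Nonempty ∧ ((p ∩ F0 A).Nonempty → A.start ∈ p)) ∧ ∃ x ∈ p, x ∈ A.accept)
        = (Finset.univ.filter fun p : Finset σ₁ =>
          p.Nonempty ∧ ((p ∩ F0 A).Nonempty → A.start ∈ p)).filter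
            (fun p => ∃ x ∈ p, x ∈ A.accept) := by
      ext p; simp [Finset.mem_filter, and_assoc]
    have e2 : (Finset.univ.filter fun p : Finset σ₁ =>
        (p.Nonempty ∧ ((p ∩ F0 A).Nonempty → A.start ∈ p)) ∧ ¬ ∃ x ∈ p, x ∈ A.accept)
        = (Finset.univ.filter fun p : Finset σ₁ =>
          p.Nonempty ∧ ((p ∩ F0 A).Nonempty → A.start ∈ p)).filter
            (fun p => ¬ ∃ x ∈ p, x ∈ A.accept) := by
      ext p; simp [Finset.mem_filter, and_assoc]
    rw [e1, e2]
    exact Finset.card_filter_add_card_filter_not _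
  have hPup : (Finset.univ.filter fun p : Finset σ₁ =>
      p.Nonempty ∧ ((p ∩ F0 A).Nonempty → A.start ∈ p)).card
      ≤ 2 ^ (M - 1) + (2 ^ (M - k₁ - 1) - 1) := by
    have hsub : (Finset.univ.filter fun p : Finset σ₁ =>
        p.Nonempty ∧ ((p ∩ F0 A).Nonempty → A.start ∈ p)) ⊆
        (Finset.univ.filter fun p : Finset σ₁ => A.start ∈ p) ∪
        (Finset.univ.filter fun p : Finset σ₁ =>
          p ⊆ (insert A.start (F0 A))ᶜ ∧ p.Nonempty) := by
      intro p hp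
      rw [Finset.mem_filter] at hp
      obtain ⟨-, hne, himp⟩ := hp
      rw [Finset.mem_union, Finset.mem_filter, Finset.mem_filter]
      by_cases hs : A.start ∈ p
      · exact Or.inl ⟨Finset.mem_univ _, hs⟩
      · refine Or.inr ⟨Finset.mem_univ _, fun x hx => Finset.mem_compl.2 ?_, hne⟩
        rw [Finset.mem_insert]
        push_neg
        refine ⟨fun hxs => hs (hxs ▸ hx), fun hxF =>
          hs (himp ⟨x, Finset.mem_inter.2 ⟨hx, hxF⟩⟩)⟩
    have h2 : (Finset.univ.filter fun p : Finset σ₁ =>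
        p ⊆ (insert A.start (F0 A))ᶜ ∧ p.Nonempty).card ≤ 2 ^ (M - k₁ - 1) - 1 := by
      have h := card_subset_nonempty_le
        (fun p : Finset σ₁ => p ⊆ (insert A.start (F0 A))ᶜ ∧ p.Nonempty)
        ((insert A.start (F0 A))ᶜ) (fun p hp => hp)
      rwa [hRcard] at h
    calc (Finset.univ.filter fun p : Finset σ₁ =>
        p.Nonempty ∧ ((p ∩ F0 A).Nonempty → A.start ∈ p)).card
        ≤ _ := Finset.card_le_card hsub
      _ ≤ _ := Finset.card_union_le _ _
      _ ≤ 2 ^ (M - 1) + (2 ^ (M - k₁ - 1) - 1) := by rw [hmemcard]; exact Nat.add_le_add le_rfl h2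
  -- lower bound on the number of final-hitting first components
  have hflow : 2 ^ (M - 1) - 2 ^ (M - k₁ - 1) ≤
      (Finset.univ.filter fun p : Finset σ₁ =>
        (p.Nonempty ∧ ((p ∩ F0 A).Nonempty → A.start ∈ p)) ∧ ∃ x ∈ p, x ∈ A.accept).card := by
    have hsub : (Finset.univ.filter fun p : Finset σ₁ => A.start ∈ p ∧ (p ∩ F0 A).Nonempty)
        ⊆ (Finset.univ.filter fun p : Finset σ₁ =>
          (p.Nonempty ∧ ((p ∩ F0 A).Nonempty → A.start ∈ p)) ∧ ∃ x ∈ p, x ∈ A.accept) := by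
      intro p hp
      rw [Finset.mem_filter] at hp ⊢
      obtain ⟨-, hs, ⟨x, hx⟩⟩ := hp
      rw [Finset.mem_inter] at hx
      exact ⟨Finset.mem_univ _, ⟨⟨A.start, hs⟩, fun _ => hs⟩, x, hx.1, ((mem_F0 A).1 hx.2).1⟩
    have hsplit2 : (Finset.univ.filter fun p : Finset σ₁ => A.start ∈ p ∧ (p ∩ F0 A).Nonempty).card
        + (Finset.univ.filter fun p : Finset σ₁ => A.start ∈ p ∧ ¬ (p ∩ F0 A).Nonempty).card
        = (Finset.univ.filter fun p : Finset σ₁ => A.start ∈ p).card := by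
      rw [← Finset.filter_filter, ← Finset.filter_filter]
      exact Finset.card_filter_add_card_filter_not _
    have hno : (Finset.univ.filter fun p : Finset σ₁ =>
        A.start ∈ p ∧ ¬ (p ∩ F0 A).Nonempty).card ≤ 2 ^ (M - k₁ - 1) := by
      have h := card_mem_le A.start
        (fun p : Finset σ₁ => A.start ∈ p ∧ ¬ (p ∩ F0 A).Nonempty) ((insert A.start (F0 A))ᶜ)
        (fun p hp => ⟨hp.1, fun x hx => Finset.mem_compl.2 (by
          rw [Finset.mem_insert]
          push_neg
          exact ⟨Finset.ne_of_mem_erase hx, fun hxF => hp.2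
            ⟨x, Finset.mem_inter.2 ⟨Finset.mem_of_mem_erase hx, hxF⟩⟩⟩)⟩)
      rwa [hRcard] at h
    calc 2 ^ (M - 1) - 2 ^ (M - k₁ - 1)
        ≤ (Finset.univ.filter fun p : Finset σ₁ =>
            A.start ∈ p ∧ (p ∩ F0 A).Nonempty).card := by omega
      _ ≤ _ := Finset.card_le_card hsub
  -- final arithmetic
  have hM2 : 2 ^ (M - 1) = 2 * 2 ^ (M - 2) := by
    conv_lhs => rw [show M - 1 = (M - 2) + 1 from by omega]
    rw [pow_succ]; ring
  have hN2 : 2 ^ N = 2 * 2 ^ (N - 1) := by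
    conv_lhs => rw [show N = (N - 1) + 1 from by omega]
    rw [pow_succ]; ring
  have hMK : 2 ^ (M - k₁ - 1) ≤ 2 ^ (M - 2) := Nat.pow_le_pow_right (by norm_num) (by omega)
  have hMK1 : 1 ≤ 2 ^ (M - k₁ - 1) := Nat.one_le_two_pow
  have hN1 : 1 ≤ 2 ^ (N - 1) := Nat.one_le_two_pow
  rw [hcard]
  refine Nat.le_sub_of_add_le ?_
  calc (Finset.univ.filter (good A B)).card
        + (2 ^ (M - 1) - 2 ^ (M - k₁ - 1)) * (2 ^ (N - 1) - 1)
      ≤ ((Finset.univ.filter fun p : Finset σ₁ =>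
          (p.Nonempty ∧ ((p ∩ F0 A).Nonempty → A.start ∈ p)) ∧ ¬ ∃ x ∈ p, x ∈ A.accept).card
          * (2 ^ N - 1) +
        (Finset.univ.filter fun p : Finset σ₁ =>
          (p.Nonempty ∧ ((p ∩ F0 A).Nonempty → A.start ∈ p)) ∧ ∃ x ∈ p, x ∈ A.accept).card
          * 2 ^ (N - 1)) +
        (Finset.univ.filter fun p : Finset σ₁ =>
          (p.Nonempty ∧ ((p ∩ F0 A).Nonempty → A.start ∈ p)) ∧ ∃ x ∈ p, x ∈ A.accept).card
          * (2 ^ (N - 1) - 1) :=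
        Nat.add_le_add hmain (Nat.mul_le_mul hflow le_rfl)
    _ = (Finset.univ.filter fun p : Finset σ₁ =>
          (p.Nonempty ∧ ((p ∩ F0 A).Nonempty → A.start ∈ p)) ∧ ¬ ∃ x ∈ p, x ∈ A.accept).card
          * (2 ^ N - 1) +
        (Finset.univ.filter fun p : Finset σ₁ =>
          (p.Nonempty ∧ ((p ∩ F0 A).Nonempty → A.start ∈ p)) ∧ ∃ x ∈ p, x ∈ A.accept).card
          * (2 ^ (N - 1) + (2 ^ (N - 1) - 1)) := by
        rw [Nat.mul_add, Nat.add_assoc]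
    _ = (Finset.univ.filter fun p : Finset σ₁ =>
          (p.Nonempty ∧ ((p ∩ F0 A).Nonempty → A.start ∈ p)) ∧ ¬ ∃ x ∈ p, x ∈ A.accept).card
          * (2 ^ N - 1) +
        (Finset.univ.filter fun p : Finset σ₁ =>
          (p.Nonempty ∧ ((p ∩ F0 A).Nonempty → A.start ∈ p)) ∧ ∃ x ∈ p, x ∈ A.accept).card
          * (2 ^ N - 1) := by
        congr 2
        omega
    _ = ((Finset.univ.filter fun p : Finset σ₁ =>
          (p.Nonempty ∧ ((p ∩ F0 A).Nonempty → A.start ∈ p)) ∧ ¬ ∃ x ∈ p, x ∈ A.accept).card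
        + (Finset.univ.filter fun p : Finset σ₁ =>
          (p.Nonempty ∧ ((p ∩ F0 A).Nonempty → A.start ∈ p)) ∧ ∃ x ∈ p, x ∈ A.accept).card)
          * (2 ^ N - 1) := (Nat.add_mul _ _ _).symm
    _ ≤ (3 * 2 ^ (M - 2) - 1) * (2 ^ N - 1) := Nat.mul_le_mul (by omega) le_rfl
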